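/- Every nonempty irreducible subbasis-closed set V(N) of a subsemimodule space D has a unique generic point if and only if for every subsemimodule N with V(N) nonempty and irreducible, N^ω ∈ V(N), where N^ω = ⋂{L : L ∈ V(N)}. -/

import Mathlib

open Submodule

variable {R M : Type*} [CommSemiring R] [AddCommMonoid M] [Module R M]

/-- `V D N` = the set of members of `D` containing the subsemimodule `N`. -/
def V (D : Set (Submodule R M)) (N : Submodule R M) : Set (Submodule R M) :=
  {L ∈ D | N ≤ L}

/-- The topology on `D` generated by the sets `V D N` as a closed subbasis. -/
def subTop (D : Set (Submodule R M)) : TopologicalSpace ↥D :=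
  TopologicalSpace.generateFrom
    {U : Set ↥D | ∃ N : Submodule R M, U = {L : ↥D | ¬ N ≤ (L : Submodule R M)}}

lemma open_up {D : Set (Submodule R M)} {U : Set ↥D}
    (hU : TopologicalSpace.GenerateOpen
      {U : Set ↥D | ∃ N : Submodule R M, U = {L : ↥D | ¬ N ≤ (L : Submodule R M)}} U)
    {L x : ↥D} (hx : (x : Submodule R M) ≤ L) (hL : L ∈ U) : x ∈ U := by
  induction hU with
  | basic s hs =>
      obtain ⟨N, rfl⟩ := hs
      intro h; exact hL (h.trans hx)
  | univ => trivial
  | inter s t _ _ ihs iht => exact ⟨ihs hL.1, iht hL.2⟩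
  | sUnion S _ ih =>
      obtain ⟨s, hs, hLs⟩ := hL
      exact ⟨s, hs, ih s hs hLs⟩

lemma closure_singleton_eq {D : Set (Submodule R M)} (x : ↥D) :
    @closure ↥D (subTop D) {x} = {L : ↥D | (x : Submodule R M) ≤ (L : Submodule R M)} := by
  letI : TopologicalSpace ↥D := subTop D
  apply le_antisymm
  · apply closure_minimal
    · exact Set.singleton_subset_iff.mpr (le_refl (x : Submodule R M))
    · exact ⟨TopologicalSpace.GenerateOpen.basic _ ⟨(x : Submodule R M), rfl⟩⟩
  · intro L hL
    rw [_root_.mem_closure_iff]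
    intro U hU hLU
    exact ⟨x, open_up hU hL hLU, rfl⟩

theorem stmt14 (D : Set (Submodule R M)) (hD : (⊤ : Submodule R M) ∉ D) :
    (∀ N : Submodule R M,
        ({L : ↥D | N ≤ (L : Submodule R M)}).Nonempty →
        @IsIrreducible ↥D (subTop D) {L : ↥D | N ≤ (L : Submodule R M)} →
        ∃! x : ↥D, x ∈ {L : ↥D | N ≤ (L : Submodule R M)} ∧
          {L : ↥D | N ≤ (L : Submodule R M)} = @closure ↥D (subTop D) {x})
    ↔ (∀ N : Submodule R M,
        ({L : ↥D | N ≤ (L : Submodule R M)}).Nonempty →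
        @IsIrreducible ↥D (subTop D) {L : ↥D | N ≤ (L : Submodule R M)} →
        sInf (V D N) ∈ V D N) := by
  constructor
  · intro h N hne hirr
    obtain ⟨x, ⟨hxmem, hclos⟩, _⟩ := h N hne hirr
    rw [closure_singleton_eq] at hclos
    have hxV : (x : Submodule R M) ∈ V D N := ⟨x.2, hxmem⟩
    have : sInf (V D N) = (x : Submodule R M) := by
      apply le_antisymm (sInf_le hxV)
      apply le_sInf
      intro L hL
      have : (⟨L, hL.1⟩ : ↥D) ∈ {L : ↥D | N ≤ (L : Submodule R M)} := hL.2
      rw [hclos] at this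
      exact this
    rw [this]; exact hxV
  · intro h N hne hirr
    obtain ⟨hmD, hNm⟩ := h N hne hirr
    set m := sInf (V D N) with hm
    refine ⟨⟨m, hmD⟩, ⟨hNm, ?_⟩, ?_⟩
    · rw [closure_singleton_eq]
      ext L
      simp only [Set.mem_setOf_eq]
      constructor
      · intro hL
        exact sInf_le ⟨L.2, hL⟩
      · intro hL
        exact hNm.trans hL
    · rintro y ⟨hy, hyc⟩
      rw [closure_singleton_eq] at hyc
      have h1 : (y : Submodule R M) ≤ m := by
        apply le_sInf
        intro L hL
        have : (⟨L, hL.1⟩ : ↥D) ∈ {L : ↥D | N ≤ (L : Submodule R M)} := hL.2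
        rw [hyc] at this
        exact this
      have h2 : m ≤ (y : Submodule R M) := sInf_le ⟨y.2, hy⟩
      exact Subtype.ext (le_antisymm h1 h2)
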